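/- Let dim H ≥ 3 and let φ : E(H) → E(H) be an order-preserving (in both directions) bijection such that φ(λP) = U(λP)U* for all rank-one projections P and λ ∈ [0,1], where U is a fixed unitary or antiunitary operator. Then φ(E) = UEU* for all effects E. -/

import Mathlib

open scoped InnerProductSpace
open ContinuousLinearMap

/-- An effect: a positive operator majorized by the identity (Loewner order). -/
def IsEffect {H : Type} [NormedAddCommGroup H] [InnerProductSpace ℂ H] [CompleteSpace H]
    (E : H →L[ℂ] H) : Prop := 0 ≤ E ∧ E ≤ 1

/-- A rank-one (orthogonal) projection. -/
def IsRankOneProjection {H : Type} [NormedAddCommGroup H] [InnerProductSpace ℂ H]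
    [CompleteSpace H] (P : H →L[ℂ] H) : Prop :=
  IsIdempotentElem P ∧ IsSelfAdjoint P ∧ Module.finrank ℂ (LinearMap.range P.toLinearMap) = 1

/-- An antiunitary operator: a conjugate-linear bijective map which reverses inner
products (in particular a surjective isometry). -/
def IsAntiunitary {H : Type} [NormedAddCommGroup H] [InnerProductSpace ℂ H]
    [CompleteSpace H] (f : H → H) : Prop :=
  Function.Bijective f ∧ (∀ x y : H, f (x + y) = f x + f y) ∧
    (∀ (c : ℂ) (x : H), f (c • x) = (starRingEnd ℂ c) • f x) ∧
    ∀ x y : H, ⟪f x, f y⟫_ℂ = ⟪y, x⟫_ℂ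

/-- `ψ` is conjugation `X ↦ U X U*` by a fixed unitary or antiunitary operator `U`. -/
def IsUnitaryOrAntiunitaryConjugation {H : Type} [NormedAddCommGroup H]
    [InnerProductSpace ℂ H] [CompleteSpace H]
    (ψ : (H →L[ℂ] H) → (H →L[ℂ] H)) : Prop :=
  (∃ U : H →L[ℂ] H, U ∘L adjoint U = 1 ∧ adjoint U ∘L U = 1 ∧
      ∀ X : H →L[ℂ] H, ψ X = U ∘L X ∘L adjoint U) ∨
    (∃ f g : H → H, IsAntiunitary f ∧ Function.LeftInverse g f ∧
      Function.RightInverse g f ∧ ∀ (X : H →L[ℂ] H) (x : H), ψ X x = f (X (g x)))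


set_option maxHeartbeats 1000000
set_option synthInstance.maxHeartbeats 1000000

open scoped InnerProductSpace
open ContinuousLinearMap

section Helpers

variable {H : Type} [NormedAddCommGroup H] [InnerProductSpace ℂ H] [CompleteSpace H]

/-- The rank-one operator `x ↦ ⟪e,x⟫ • e`. -/
noncomputable def rkOne (e : H) : H →L[ℂ] H :=
  (ContinuousLinearMap.toSpanSingleton ℂ e).comp (innerSL ℂ e)

lemma rkOne_apply (e x : H) : rkOne e x = ⟪e, x⟫_ℂ • e := rfl

lemma rkOne_isSymmetric (e : H) :
    ∀ x y : H, ⟪rkOne e x, y⟫_ℂ = ⟪x, rkOne e y⟫_ℂ := by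
  intro x y
  rw [rkOne_apply, rkOne_apply, inner_smul_left, inner_smul_right, inner_conj_symm]
  ring

lemma rkOne_selfAdjoint (e : H) : IsSelfAdjoint (rkOne e) :=
  isSelfAdjoint_iff_isSymmetric.mpr (rkOne_isSymmetric e)

lemma rkOne_isRankOneProjection {e : H} (he : ‖e‖ = 1) :
    IsRankOneProjection (rkOne e) := by
  have he0 : e ≠ 0 := by intro h; rw [h, norm_zero] at he; norm_num at he
  have hee : ⟪e, e⟫_ℂ = 1 := by
    rw [inner_self_eq_norm_sq_to_K, he]; norm_num
  refine ⟨?_, rkOne_selfAdjoint e, ?_⟩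
  · ext x
    simp [ContinuousLinearMap.mul_apply, rkOne_apply, inner_smul_right, hee, he]
  · have hrange : LinearMap.range (rkOne e).toLinearMap = ℂ ∙ e := by
      apply le_antisymm
      · rintro x ⟨y, rfl⟩
        exact Submodule.smul_mem _ _ (Submodule.mem_span_singleton_self e)
      · rw [Submodule.span_singleton_le_iff_mem]
        exact ⟨e, by simp [rkOne_apply, hee, he]⟩
    rw [hrange]
    exact finrank_span_singleton he0

end Helpers

section Core

variable {H : Type} [NormedAddCommGroup H] [InnerProductSpace ℂ H] [CompleteSpace H]

/-- A weak atom `λ P`. -/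
def IsWeakAtom (W : H →L[ℂ] H) : Prop :=
  ∃ (lam : ℝ) (P : H →L[ℂ] H), lam ∈ Set.Icc (0:ℝ) 1 ∧ IsRankOneProjection P ∧
    W = (lam : ℂ) • P

lemma creal (r : ℝ) : RCLike.re ((r : ℂ)) = r := by
  rw [RCLike.re_to_complex, Complex.ofReal_re]

lemma effect_isPositive {A : H →L[ℂ] H} (h : IsEffect A) : A.IsPositive :=
  (ContinuousLinearMap.nonneg_iff_isPositive A).mp h.1

lemma le_of_inner (A B : H →L[ℂ] H) (hA : IsSelfAdjoint A) (hB : IsSelfAdjoint B)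
    (h : ∀ x, RCLike.re ⟪A x, x⟫_ℂ ≤ RCLike.re ⟪B x, x⟫_ℂ) : A ≤ B := by
  rw [ContinuousLinearMap.le_def]
  refine ⟨(hB.sub hA).isSymmetric, fun x => ?_⟩
  have hx := h x
  simp only [ContinuousLinearMap.reApplyInnerSelf, ContinuousLinearMap.sub_apply,
    inner_sub_left, map_sub]
  linarith

lemma inner_le_of_le {A B : H →L[ℂ] H} (h : A ≤ B) (x : H) :
    RCLike.re ⟪A x, x⟫_ℂ ≤ RCLike.re ⟪B x, x⟫_ℂ := by
  have h2 := ((ContinuousLinearMap.le_def A B).mp h).2 x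
  simp only [ContinuousLinearMap.reApplyInnerSelf, ContinuousLinearMap.sub_apply,
    inner_sub_left, map_sub] at h2
  linarith

lemma smul_selfAdjoint {P : H →L[ℂ] H} (hP : IsSelfAdjoint P) (lam : ℝ) :
    IsSelfAdjoint ((lam : ℂ) • P) :=
  IsSelfAdjoint.smul (by show star ((lam:ℂ)) = ((lam:ℂ)); rw [Complex.star_def, Complex.conj_ofReal]) hP

lemma re_ofReal_mul (r : ℝ) (z : ℂ) : RCLike.re ((r : ℂ) * z) = r * RCLike.re z := by
  simp only [RCLike.re_to_complex, Complex.mul_re, Complex.ofReal_re, Complex.ofReal_im,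
    zero_mul, sub_zero]

lemma exists_weakAtom (A : H →L[ℂ] H) (hA : IsEffect A) (v : H)
    (hv : CFC.sqrt A v ≠ 0) :
    ∃ W : H →L[ℂ] H, IsWeakAtom W ∧ W ≤ A ∧
      ∀ w, W w = (((‖v‖^2 : ℝ) : ℂ))⁻¹ • (⟪CFC.sqrt A v, w⟫_ℂ • CFC.sqrt A v) := by
  have hApos := effect_isPositive hA
  set S := CFC.sqrt A with hSdef
  have hS0 : (0 : H →L[ℂ] H) ≤ S := CFC.sqrt_nonneg A
  have hSsa : IsSelfAdjoint S := .of_nonneg hS0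
  have hSsym : ∀ a b : H, ⟪S a, b⟫_ℂ = ⟪a, S b⟫_ℂ := fun a b =>
    (isSelfAdjoint_iff_isSymmetric.mp hSsa) a b
  have hS2 : S * S = A := by have := CFC.sq_sqrt A hA.1; rwa [sq] at this
  have hSS : ∀ x, S (S x) = A x := fun x => by
    rw [← hS2]; rfl
  have hv0 : v ≠ 0 := by rintro rfl; simp at hv
  have hnv : ‖v‖ ≠ 0 := norm_ne_zero_iff.mpr hv0
  have hnSv : ‖S v‖ ≠ 0 := norm_ne_zero_iff.mpr hv
  have hnvC : ((‖v‖ : ℂ)) ≠ 0 := by exact_mod_cast hnv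
  have hnSvC : ((‖S v‖ : ℂ)) ≠ 0 := by exact_mod_cast hnSv
  have hAxnorm : ∀ x, RCLike.re ⟪A x, x⟫_ℂ = ‖S x‖^2 := by
    intro x
    rw [← hSS x, hSsym (S x) x, inner_self_eq_norm_sq]
  set e : H := ((‖S v‖ : ℂ))⁻¹ • S v with hedef
  have he : ‖e‖ = 1 := by
    rw [hedef, norm_smul, norm_inv, Complex.norm_real, norm_norm, inv_mul_cancel₀ hnSv]
  set lam : ℝ := ‖S v‖^2 / ‖v‖^2 with hlam
  have hlam0 : 0 ≤ lam := by positivity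
  have hlam1 : lam ≤ 1 := by
    rw [hlam, div_le_one (by positivity)]
    have h1 := inner_le_of_le hA.2 v
    have h2 : RCLike.re ⟪(1 : H →L[ℂ] H) v, v⟫_ℂ = ‖v‖^2 := by
      rw [ContinuousLinearMap.one_apply, inner_self_eq_norm_sq]
    rw [← hAxnorm v]
    linarith
  set W : H →L[ℂ] H := (lam : ℂ) • rkOne e with hWdef
  have hWform : ∀ w, W w = (((‖v‖^2 : ℝ) : ℂ))⁻¹ • (⟪S v, w⟫_ℂ • S v) := by
    intro w
    rw [hWdef]
    simp only [ContinuousLinearMap.smul_apply, rkOne_apply, hedef]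
    rw [inner_smul_left]
    simp only [map_inv₀, Complex.conj_ofReal]
    rw [smul_smul, smul_smul, smul_smul]
    congr 1
    rw [hlam]
    push_cast
    field_simp
  refine ⟨W, ⟨lam, rkOne e, ⟨hlam0, hlam1⟩, rkOne_isRankOneProjection he, rfl⟩, ?_, hWform⟩
  apply le_of_inner _ _ (smul_selfAdjoint (rkOne_selfAdjoint e) lam) hApos.isSelfAdjoint
  intro x
  have hWx : ⟪W x, x⟫_ℂ = (((‖v‖^2 : ℝ)) : ℂ)⁻¹ * ((‖⟪S v, x⟫_ℂ‖ : ℝ) : ℂ)^2 := by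
    rw [hWform x, inner_smul_left, inner_smul_left, RCLike.conj_mul, map_inv₀,
      Complex.conj_ofReal]
    rfl
  rw [hWx]
  have hre2 : RCLike.re (((((‖v‖^2 : ℝ))) : ℂ)⁻¹ * ((‖⟪S v, x⟫_ℂ‖ : ℝ) : ℂ)^2)
      = (‖v‖^2)⁻¹ * ‖⟪S v, x⟫_ℂ‖^2 := by
    rw [show ((((‖v‖^2 : ℝ)) : ℂ))⁻¹ = (((((‖v‖^2)⁻¹ : ℝ)) : ℂ)) by push_cast; ring,
      ← Complex.ofReal_pow, re_ofReal_mul, creal]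
  rw [hre2, hAxnorm x]
  have hcs : ‖⟪S v, x⟫_ℂ‖ ≤ ‖v‖ * ‖S x‖ := by
    rw [hSsym v x]; exact norm_inner_le_norm v (S x)
  have h0 : (0:ℝ) ≤ ‖⟪S v, x⟫_ℂ‖ := norm_nonneg _
  rw [inv_mul_le_iff₀ (by positivity)]
  nlinarith [norm_nonneg v, norm_nonneg (S x)]

lemma weakAtom_isEffect {W : H →L[ℂ] H} (h : IsWeakAtom W) : IsEffect W := by
  obtain ⟨lam, P, ⟨h0, h1⟩, ⟨hPi, hPsa, _⟩, rfl⟩ := h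
  have hPsym : ∀ a b : H, ⟪P a, b⟫_ℂ = ⟪a, P b⟫_ℂ := fun a b =>
    (isSelfAdjoint_iff_isSymmetric.mp hPsa) a b
  have hPP : ∀ x, ⟪P x, x⟫_ℂ = ⟪P x, P x⟫_ℂ := by
    intro x
    conv_lhs => rw [show P x = P (P x) by rw [← ContinuousLinearMap.mul_apply, hPi]]
    rw [hPsym (P x) x]
  have hrePP : ∀ x, RCLike.re ⟪P x, x⟫_ℂ = ‖P x‖^2 := by
    intro x
    rw [hPP x, inner_self_eq_norm_sq]
  have hPnorm : ∀ x, ‖P x‖ ≤ ‖x‖ := by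
    intro x
    have h3 : RCLike.re ⟪P x, x⟫_ℂ ≤ ‖⟪P x, x⟫_ℂ‖ := RCLike.re_le_norm _
    have h2 : ‖P x‖^2 ≤ ‖P x‖ * ‖x‖ := by
      have := norm_inner_le_norm (𝕜 := ℂ) (P x) x
      rw [hrePP x] at h3
      linarith
    rcases eq_or_lt_of_le (norm_nonneg (P x)) with hz | hz
    · rw [← hz]; exact norm_nonneg x
    · nlinarith
  have hsmul : ∀ x, RCLike.re ⟪((lam : ℂ) • P) x, x⟫_ℂ = lam * ‖P x‖^2 := by
    intro x
    rw [ContinuousLinearMap.smul_apply, inner_smul_left, Complex.conj_ofReal,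
      re_ofReal_mul, hrePP x]
  constructor
  · apply le_of_inner _ _ (IsSelfAdjoint.zero _) (smul_selfAdjoint hPsa lam)
    intro x
    rw [hsmul x]
    simp only [ContinuousLinearMap.zero_apply, inner_zero_left, map_zero]
    positivity
  · apply le_of_inner _ _ (smul_selfAdjoint hPsa lam) (IsSelfAdjoint.one _)
    intro x
    rw [hsmul x]
    have h8 : RCLike.re ⟪(1 : H →L[ℂ] H) x, x⟫_ℂ = ‖x‖^2 := by
      rw [ContinuousLinearMap.one_apply, inner_self_eq_norm_sq]
    rw [h8]
    have h9 : ‖P x‖^2 ≤ ‖x‖^2 := by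
      have := hPnorm x
      nlinarith [norm_nonneg (P x), norm_nonneg x]
    nlinarith

lemma le_of_forall_weakAtom_le {A B : H →L[ℂ] H} (hA : IsEffect A) (hB : IsEffect B)
    (h : ∀ W, IsWeakAtom W → W ≤ A → W ≤ B) : A ≤ B := by
  have hApos := effect_isPositive hA
  have hBpos := effect_isPositive hB
  set S := CFC.sqrt A with hSdef
  have hS0 : (0 : H →L[ℂ] H) ≤ S := CFC.sqrt_nonneg A
  have hSsa : IsSelfAdjoint S := .of_nonneg hS0
  have hSsym : ∀ a b : H, ⟪S a, b⟫_ℂ = ⟪a, S b⟫_ℂ := fun a b =>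
    (isSelfAdjoint_iff_isSymmetric.mp hSsa) a b
  have hS2 : S * S = A := by have := CFC.sq_sqrt A hA.1; rwa [sq] at this
  have hSS : ∀ x, S (S x) = A x := fun x => by rw [← hS2]; rfl
  have hAxnorm : ∀ x, RCLike.re ⟪A x, x⟫_ℂ = ‖S x‖^2 := by
    intro x
    rw [← hSS x, hSsym (S x) x, inner_self_eq_norm_sq]
  apply le_of_inner _ _ hApos.isSelfAdjoint hBpos.isSelfAdjoint
  intro y
  by_cases hy : S y = 0
  · rw [hAxnorm y, hy]
    simp only [norm_zero, zero_pow, ne_eq, OfNat.ofNat_ne_zero, not_false_eq_true]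
    exact hBpos.re_inner_nonneg_left y
  · have hSu0 : S (S y) ≠ 0 := by
      intro h0
      have hAy0 : A y = 0 := by rw [← hSS y]; exact h0
      have h1 : ‖S y‖^2 = 0 := by rw [← hAxnorm y, hAy0]; simp
      exact hy (norm_eq_zero.mp (pow_eq_zero_iff two_ne_zero |>.mp h1))
    obtain ⟨W, hWatom, hWA, hWform⟩ := exists_weakAtom A hA (S y) hSu0
    have hWB := h W hWatom hWA
    have hle := inner_le_of_le hWB y
    have hWy : W y = A y := by
      rw [hWform y, ← hSdef]
      have h1 : ⟪S (S y), y⟫_ℂ = ((‖S y‖^2 : ℝ) : ℂ) := by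
        rw [hSsym (S y) y, inner_self_eq_norm_sq_to_K]
        rw [Complex.ofReal_pow]
        rfl
      rw [h1, smul_smul]
      have hnu : (‖S y‖ : ℝ) ≠ 0 := norm_ne_zero_iff.mpr hy
      have h2 : (((‖S y‖^2 : ℝ) : ℂ))⁻¹ * ((‖S y‖^2 : ℝ) : ℂ) = 1 := by
        rw [inv_mul_cancel₀]
        exact_mod_cast pow_ne_zero 2 hnu
      rw [h2, one_smul]
      exact hSS y
    rw [← hWy]
    exact hle

end Core

section Psi

variable {H : Type} [NormedAddCommGroup H] [InnerProductSpace ℂ H] [CompleteSpace H]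

lemma antiunitary_map_zero {f : H → H} (hf : IsAntiunitary f) : f 0 = 0 := by
  have h := hf.2.2.1 0 0
  simpa using h

lemma antiunitary_norm {g : H → H} (hg : IsAntiunitary g) (y : H) : ‖g y‖ = ‖y‖ := by
  have h1 : ⟪g y, g y⟫_ℂ = ⟪y, y⟫_ℂ := hg.2.2.2 y y
  have h2 : ‖g y‖^2 = ‖y‖^2 := by
    rw [← inner_self_eq_norm_sq (𝕜 := ℂ), ← inner_self_eq_norm_sq (𝕜 := ℂ), h1]
  rw [← Real.sqrt_sq (norm_nonneg (g y)), ← Real.sqrt_sq (norm_nonneg y), h2]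

lemma antiunitary_inv {f g : H → H} (hf : IsAntiunitary f) (hgf : Function.LeftInverse g f)
    (hfg : Function.RightInverse g f) : IsAntiunitary g := by
  obtain ⟨hbij, hadd, hsmul, hinner⟩ := hf
  refine ⟨⟨hfg.injective, hgf.surjective⟩, ?_, ?_, ?_⟩
  · intro a b
    apply hbij.1
    rw [hfg (a + b), hadd, hfg a, hfg b]
  · intro c x
    apply hbij.1
    rw [hfg (c • x), hsmul, hfg x, Complex.conj_conj]
  · intro a b
    have h := hinner (g b) (g a)
    rw [hfg b, hfg a] at h
    exact h.symm

lemma antiunitary_isPositive {f g : H → H} (hf : IsAntiunitary f)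
    (hgf : Function.LeftInverse g f) (hfg : Function.RightInverse g f)
    {Z W : H →L[ℂ] H} (hZW : ∀ x, W x = f (Z (g x))) (hZ : Z.IsPositive) : W.IsPositive := by
  have hZsym : ∀ a b : H, ⟪Z a, b⟫_ℂ = ⟪a, Z b⟫_ℂ := fun a b =>
    (isSelfAdjoint_iff_isSymmetric.mp hZ.isSelfAdjoint) a b
  have hWsym : ∀ x y : H, ⟪W x, y⟫_ℂ = ⟪x, W y⟫_ℂ := by
    intro x y
    rw [hZW x, hZW y]
    calc ⟪f (Z (g x)), y⟫_ℂ = ⟪f (Z (g x)), f (g y)⟫_ℂ := by rw [hfg y]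
      _ = ⟪g y, Z (g x)⟫_ℂ := hf.2.2.2 _ _
      _ = ⟪Z (g y), g x⟫_ℂ := (hZsym (g y) (g x)).symm
      _ = ⟪f (g x), f (Z (g y))⟫_ℂ := (hf.2.2.2 _ _).symm
      _ = ⟪x, f (Z (g y))⟫_ℂ := by rw [hfg x]
  refine ⟨(isSelfAdjoint_iff_isSymmetric.mpr (fun a b => hWsym a b)).isSymmetric, fun x => ?_⟩
  have h1 : ⟪W x, x⟫_ℂ = ⟪g x, Z (g x)⟫_ℂ := by
    rw [hZW x]
    calc ⟪f (Z (g x)), x⟫_ℂ = ⟪f (Z (g x)), f (g x)⟫_ℂ := by rw [hfg x]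
      _ = ⟪g x, Z (g x)⟫_ℂ := hf.2.2.2 _ _
  have h2 : RCLike.re ⟪g x, Z (g x)⟫_ℂ = RCLike.re ⟪Z (g x), g x⟫_ℂ := by
    rw [← inner_conj_symm (Z (g x)) (g x)]
    exact RCLike.conj_re (K := ℂ) _
  have h3 := hZ.2 (g x)
  rw [ContinuousLinearMap.reApplyInnerSelf] at h3 ⊢
  rw [h1, h2]
  exact h3

/-- The conjugate-linear conjugation `x ↦ g (P (f x))` as a continuous linear map. -/
noncomputable def conjCLM {f g : H → H} (hf : IsAntiunitary f) (hg : IsAntiunitary g)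
    (P : H →L[ℂ] H) : H →L[ℂ] H :=
  LinearMap.mkContinuous
    { toFun := fun x => g (P (f x))
      map_add' := fun a b => by
        show g (P (f (a + b))) = g (P (f a)) + g (P (f b))
        rw [hf.2.1, map_add, hg.2.1]
      map_smul' := fun c x => by
        show g (P (f (c • x))) = (RingHom.id ℂ) c • g (P (f x))
        rw [hf.2.2.1, map_smul, hg.2.2.1, Complex.conj_conj]
        rfl }
    ‖P‖ (fun x => by
      simp only [LinearMap.coe_mk, AddHom.coe_mk]
      rw [antiunitary_norm hg]
      calc ‖P (f x)‖ ≤ ‖P‖ * ‖f x‖ := P.le_opNorm (f x)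
        _ = ‖P‖ * ‖x‖ := by rw [antiunitary_norm hf])

lemma conjCLM_apply {f g : H → H} (hf : IsAntiunitary f) (hg : IsAntiunitary g)
    (P : H →L[ℂ] H) (x : H) : conjCLM hf hg P x = g (P (f x)) := rfl

lemma rankOneProj_exists_vec {P : H →L[ℂ] H} (hP : IsRankOneProjection P) :
    ∃ e : H, e ≠ 0 ∧ P e = e ∧ ∀ x, ∃ c : ℂ, P x = c • e := by
  obtain ⟨hPi, hPsa, hr⟩ := hP
  have hPid : ∀ x, P (P x) = P x := fun x => by
    rw [← ContinuousLinearMap.mul_apply, hPi]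
  obtain ⟨v, hv0, hvspan⟩ := finrank_eq_one_iff'.mp hr
  refine ⟨(v : H), by simpa using hv0, ?_, ?_⟩
  · obtain ⟨z, hz⟩ := v.2
    have h1 : P (P z) = P z := hPid z
    have hz' : P z = (v : H) := hz
    rw [hz'] at h1
    exact h1
  · intro x
    obtain ⟨c, hc⟩ := hvspan ⟨P x, LinearMap.mem_range_self _ x⟩
    refine ⟨c, ?_⟩
    have := congrArg (Subtype.val) hc
    simpa using this.symm

lemma span_range_rankOne {Q : H →L[ℂ] H} {e : H} (he : e ≠ 0) (heQ : Q e = e)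
    (hspan : ∀ x, ∃ c : ℂ, Q x = c • e) :
    Module.finrank ℂ (LinearMap.range Q.toLinearMap) = 1 := by
  have hrange : LinearMap.range Q.toLinearMap = ℂ ∙ e := by
    apply le_antisymm
    · rintro x ⟨y, rfl⟩
      obtain ⟨c, hc⟩ := hspan y
      rw [show Q.toLinearMap y = Q y from rfl, hc]
      exact Submodule.smul_mem _ _ (Submodule.mem_span_singleton_self e)
    · rw [Submodule.span_singleton_le_iff_mem]
      exact ⟨e, heQ⟩
  rw [hrange]
  exact finrank_span_singleton he

end Psi

section Final

variable {H : Type} [NormedAddCommGroup H] [InnerProductSpace ℂ H] [CompleteSpace H]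

lemma final_glue (φ ψ : (H →L[ℂ] H) → (H →L[ℂ] H))
    (hbij : Set.BijOn φ {E | IsEffect E} {E | IsEffect E})
    (horder : ∀ E F : H →L[ℂ] H, IsEffect E → IsEffect F → (E ≤ F ↔ φ E ≤ φ F))
    (hψeff : ∀ X : H →L[ℂ] H, IsEffect X → IsEffect (ψ X))
    (hψmono : ∀ X Y : H →L[ℂ] H, X ≤ Y ↔ ψ X ≤ ψ Y)
    (hψsurj : ∀ W : H →L[ℂ] H, IsWeakAtom W → ∃ W', IsWeakAtom W' ∧ ψ W' = W)
    (hatoms' : ∀ W : H →L[ℂ] H, IsWeakAtom W → φ W = ψ W) :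
    ∀ E : H →L[ℂ] H, IsEffect E → φ E = ψ E := by
  intro E hE
  have hφE : IsEffect (φ E) := hbij.1 hE
  have hψE : IsEffect (ψ E) := hψeff E hE
  have key : ∀ W : H →L[ℂ] H, IsWeakAtom W → (W ≤ φ E ↔ W ≤ ψ E) := by
    intro W hW
    obtain ⟨W', hW', hψW'⟩ := hψsurj W hW
    have hW'eff : IsEffect W' := weakAtom_isEffect hW'
    have hφW' : φ W' = W := by rw [hatoms' W' hW', hψW']
    constructor
    · intro hle
      rw [← hφW'] at hle
      have h1 : W' ≤ E := (horder W' E hW'eff hE).mpr hle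
      rw [← hψW']
      exact (hψmono W' E).mp h1
    · intro hle
      rw [← hψW'] at hle
      have h1 : W' ≤ E := (hψmono W' E).mpr hle
      rw [← hφW']
      exact (horder W' E hW'eff hE).mp h1
  exact le_antisymm
    (le_of_forall_weakAtom_le hφE hψE (fun W hW h => (key W hW).mp h))
    (le_of_forall_weakAtom_le hψE hφE (fun W hW h => (key W hW).mpr h))

end Final

/-- if `dim H ≥ 3` and an order automorphism `φ` of `E(H)` agrees with
conjugation by a fixed unitary or antiunitary operator on all weak atoms `λP`, then it
agrees with that conjugation on all effects. -/
theorem orderAuto_eq_conjugation_of_eq_on_weak_atoms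
    {H : Type} [NormedAddCommGroup H] [InnerProductSpace ℂ H] [CompleteSpace H]
    (hdim : 3 ≤ Module.rank ℂ H)
    (φ ψ : (H →L[ℂ] H) → (H →L[ℂ] H))
    (hbij : Set.BijOn φ {E | IsEffect E} {E | IsEffect E})
    (horder : ∀ E F : H →L[ℂ] H, IsEffect E → IsEffect F → (E ≤ F ↔ φ E ≤ φ F))
    (hψ : IsUnitaryOrAntiunitaryConjugation ψ)
    (hatoms : ∀ P : H →L[ℂ] H, IsRankOneProjection P →
      ∀ lam : ℝ, lam ∈ Set.Icc (0:ℝ) 1 → φ ((lam : ℂ) • P) = ψ ((lam : ℂ) • P)) :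
    ∀ E : H →L[ℂ] H, IsEffect E → φ E = ψ E := by
  have hatoms' : ∀ W : H →L[ℂ] H, IsWeakAtom W → φ W = ψ W := by
    rintro W ⟨lam, P, hIcc, hP, rfl⟩
    exact hatoms P hP lam hIcc
  rcases hψ with ⟨U, hU1, hU2, hUf⟩ | ⟨f, g, hfA, hgf, hfg, hψf⟩
  · -- unitary case
    have hU1' : ∀ x, U (adjoint U x) = x := fun x => by
      have := DFunLike.congr_fun hU1 x
      simpa using this
    have hU2' : ∀ x, adjoint U (U x) = x := fun x => by
      have := DFunLike.congr_fun hU2 x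
      simpa using this
    have hψmono : ∀ X Y : H →L[ℂ] H, X ≤ Y ↔ ψ X ≤ ψ Y := by
      intro X Y
      have hdiff : ψ Y - ψ X = U ∘L (Y - X) ∘L adjoint U := by
        rw [hUf, hUf]
        ext x
        simp [ContinuousLinearMap.comp_apply, ContinuousLinearMap.sub_apply]
      constructor
      · intro h
        rw [ContinuousLinearMap.le_def] at h ⊢
        rw [hdiff]
        exact h.conj_adjoint U
      · intro h
        rw [ContinuousLinearMap.le_def] at h ⊢
        rw [hdiff] at h
        have h2 := h.adjoint_conj U
        have h3 : adjoint U ∘L (U ∘L (Y - X) ∘L adjoint U) ∘L U = Y - X := by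
          ext x
          simp [ContinuousLinearMap.comp_apply, ContinuousLinearMap.sub_apply, hU2']
        rwa [h3] at h2
    have hψ0 : ψ 0 = 0 := by
      rw [hUf]; ext x; simp
    have hψ1 : ψ 1 = 1 := by
      rw [hUf]; ext x
      simp [ContinuousLinearMap.comp_apply, hU1']
    have hψeff : ∀ X : H →L[ℂ] H, IsEffect X → IsEffect (ψ X) := by
      intro X hX
      exact ⟨by rw [← hψ0]; exact (hψmono 0 X).mp hX.1, by rw [← hψ1]; exact (hψmono X 1).mp hX.2⟩
    have hψsurj : ∀ W : H →L[ℂ] H, IsWeakAtom W → ∃ W', IsWeakAtom W' ∧ ψ W' = W := by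
      rintro W ⟨lam, P, hIcc, hP, rfl⟩
      obtain ⟨e, he0, heP, hspan⟩ := rankOneProj_exists_vec hP
      have hPid : ∀ x, P (P x) = P x := fun x => by
        rw [← ContinuousLinearMap.mul_apply, hP.1]
      set Q : H →L[ℂ] H := adjoint U ∘L P ∘L U with hQdef
      have hQapp : ∀ x, Q x = adjoint U (P (U x)) := fun x => rfl
      have hQproj : IsRankOneProjection Q := by
        refine ⟨?_, hP.2.1.adjoint_conj U, ?_⟩
        · ext x
          simp only [ContinuousLinearMap.mul_apply, hQapp, hU1', hPid]
        · apply span_range_rankOne (e := adjoint U e)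
          · intro h
            apply he0
            have := hU1' e
            rw [h, map_zero] at this
            exact this.symm
          · rw [hQapp, hU1', heP]
          · intro x
            obtain ⟨c, hc⟩ := hspan (U x)
            exact ⟨c, by rw [hQapp, hc, map_smul]⟩
      refine ⟨(lam : ℂ) • Q, ⟨lam, Q, hIcc, hQproj, rfl⟩, ?_⟩
      rw [hUf]
      ext x
      simp only [ContinuousLinearMap.comp_apply, ContinuousLinearMap.smul_apply, hQapp,
        map_smul, hU1', hU2']
    exact final_glue φ ψ hbij horder hψeff hψmono hψsurj hatoms'
  · -- antiunitary case
    have hgA : IsAntiunitary g := antiunitary_inv hfA hgf hfg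
    have hfneg : ∀ a, f (-a) = -f a := by
      intro a
      have := hfA.2.2.1 (-1) a
      simpa using this
    have hfsub : ∀ a b, f (a - b) = f a - f b := by
      intro a b
      rw [sub_eq_add_neg, hfA.2.1, hfneg, sub_eq_add_neg]
    have hψmono : ∀ X Y : H →L[ℂ] H, X ≤ Y ↔ ψ X ≤ ψ Y := by
      intro X Y
      have hdiff : ∀ x, (ψ Y - ψ X) x = f ((Y - X) (g x)) := by
        intro x
        rw [ContinuousLinearMap.sub_apply, hψf, hψf, ContinuousLinearMap.sub_apply, hfsub]
      constructor
      · intro h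
        rw [ContinuousLinearMap.le_def] at h ⊢
        exact antiunitary_isPositive hfA hgf hfg hdiff h
      · intro h
        rw [ContinuousLinearMap.le_def] at h ⊢
        have hdiff2 : ∀ x, (Y - X) x = g ((ψ Y - ψ X) (f x)) := by
          intro x
          rw [hdiff (f x), hgf x, hgf _]
        exact antiunitary_isPositive hgA hfg hgf hdiff2 h
    have hψ0 : ψ 0 = 0 := by
      ext x
      rw [hψf]
      simp [antiunitary_map_zero hfA]
    have hψ1 : ψ 1 = 1 := by
      ext x
      rw [hψf]
      simp [hfg x]
    have hψeff : ∀ X : H →L[ℂ] H, IsEffect X → IsEffect (ψ X) := by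
      intro X hX
      exact ⟨by rw [← hψ0]; exact (hψmono 0 X).mp hX.1, by rw [← hψ1]; exact (hψmono X 1).mp hX.2⟩
    have hψsurj : ∀ W : H →L[ℂ] H, IsWeakAtom W → ∃ W', IsWeakAtom W' ∧ ψ W' = W := by
      rintro W ⟨lam, P, hIcc, hP, rfl⟩
      obtain ⟨e, he0, heP, hspan⟩ := rankOneProj_exists_vec hP
      have hPid : ∀ x, P (P x) = P x := fun x => by
        rw [← ContinuousLinearMap.mul_apply, hP.1]
      have hPsym : ∀ a b : H, ⟪P a, b⟫_ℂ = ⟪a, P b⟫_ℂ := fun a b =>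
        (isSelfAdjoint_iff_isSymmetric.mp hP.2.1) a b
      set Q : H →L[ℂ] H := conjCLM hfA hgA P with hQdef
      have hQapp : ∀ x, Q x = g (P (f x)) := fun x => rfl
      have hQproj : IsRankOneProjection Q := by
        refine ⟨?_, ?_, ?_⟩
        · ext x
          simp only [ContinuousLinearMap.mul_apply, hQapp]
          rw [hfg (P (f x)), hPid]
        · apply isSelfAdjoint_iff_isSymmetric.mpr
          intro x y
          show ⟪Q x, y⟫_ℂ = ⟪x, Q y⟫_ℂ
          rw [hQapp, hQapp]
          calc ⟪g (P (f x)), y⟫_ℂ = ⟪g (P (f x)), g (f y)⟫_ℂ := by rw [hgf y]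
            _ = ⟪f y, P (f x)⟫_ℂ := hgA.2.2.2 _ _
            _ = ⟪P (f y), f x⟫_ℂ := (hPsym (f y) (f x)).symm
            _ = ⟪g (f x), g (P (f y))⟫_ℂ := (hgA.2.2.2 _ _).symm
            _ = ⟪x, g (P (f y))⟫_ℂ := by rw [hgf x]
        · apply span_range_rankOne (e := g e)
          · intro h
            apply he0
            have := hfg e
            rw [h, antiunitary_map_zero hfA] at this
            exact this.symm
          · rw [hQapp, hfg, heP]
          · intro x
            obtain ⟨c, hc⟩ := hspan (f x)
            refine ⟨(starRingEnd ℂ) c, ?_⟩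
            rw [hQapp, hc, hgA.2.2.1]
      refine ⟨(lam : ℂ) • Q, ⟨lam, Q, hIcc, hQproj, rfl⟩, ?_⟩
      ext x
      rw [hψf, ContinuousLinearMap.smul_apply, ContinuousLinearMap.smul_apply, hQapp,
        hfA.2.2.1, Complex.conj_ofReal, hfg (P (f (g x))), hfg x]
    exact final_glue φ ψ hbij horder hψeff hψmono hψsurj hatoms'
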